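/- Let 0 < n < 1 and λ > 0, and set r₀ = 1 + 2λ/(2−n). Let F : ℝ³ → ℝ³ denote the vector field of the (p,q,r) system, i.e. F(p,q,r) = (p((r−1)/λ + 1 − n/(2−n) − λpr − λq/(2−n)), q(1 − λpr − λq/(2−n)) + npr, (r/n)((1−n)(r−1)/λ − 1 + n/(2−n) + λpr + λq/(2−n))). Then the Jacobian matrix of F at the equilibrium M₀ = (0, 0, r₀) has characteristic polynomial (X − 1)(X − 2)(X − (1−n)r₀/(nλ)); its three eigenvalues 1, 2, (1−n)r₀/(nλ) are real and strictly positive, so M₀ is an unstable node. -/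
import Mathlib


open Polynomial

/-- The vector field of the `(p,q,r)` system (with the third equation solved for `r'`). -/
noncomputable def Fvec (n lam : ℝ) (v : Fin 3 → ℝ) : Fin 3 → ℝ :=
  ![v 0 * ((v 2 - 1) / lam + 1 - n / (2 - n) - lam * v 0 * v 2 - lam * v 1 / (2 - n)),
    v 1 * (1 - lam * v 0 * v 2 - lam * v 1 / (2 - n)) + n * v 0 * v 2,
    (v 2 / n) * ((1 - n) * (v 2 - 1) / lam - 1 + n / (2 - n)
      + lam * v 0 * v 2 + lam * v 1 / (2 - n))]

/-- The Jacobian matrix of the `(p,q,r)` vector field at a point. -/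
noncomputable def Jac (n lam : ℝ) (x : Fin 3 → ℝ) : Matrix (Fin 3) (Fin 3) ℝ :=
  LinearMap.toMatrix' ((fderiv ℝ (Fvec n lam) x : (Fin 3 → ℝ) →L[ℝ] (Fin 3 → ℝ)) :
    (Fin 3 → ℝ) →ₗ[ℝ] (Fin 3 → ℝ))

open ContinuousLinearMap in
lemma jac_eq (n lam r : ℝ) :
    Jac n lam ![0, 0, r] =
      !![(r - 1) / lam + 1 - n / (2 - n), 0, 0;
         n * r, 1, 0;
         lam * r ^ 2 / n, lam * r / (n * (2 - n)),
           ((1 - n) * (r - 1) / lam - 1 + n / (2 - n)) / n + r / n * ((1 - n) / lam)] := by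
  set x : Fin 3 → ℝ := ![0, 0, r] with hx
  have hx0 : x 0 = 0 := rfl
  have hx1 : x 1 = 0 := rfl
  have hx2 : x 2 = r := rfl
  set f' : Fin 3 → ((Fin 3 → ℝ) →L[ℝ] ℝ) :=
    ![((r - 1) / lam + 1 - n / (2 - n)) • proj 0,
      (n * r) • proj 0 + (1 : ℝ) • proj 1,
      (lam * r ^ 2 / n) • proj 0 + (lam * r / (n * (2 - n))) • proj 1 +
        (((1 - n) * (r - 1) / lam - 1 + n / (2 - n)) / n + r / n * ((1 - n) / lam)) • proj 2]
    with hf'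
  have hp : HasFDerivAt (fun v : Fin 3 → ℝ => v 0) (proj 0 : (Fin 3 → ℝ) →L[ℝ] ℝ) x :=
    (proj 0 : (Fin 3 → ℝ) →L[ℝ] ℝ).hasFDerivAt
  have hq : HasFDerivAt (fun v : Fin 3 → ℝ => v 1) (proj 1 : (Fin 3 → ℝ) →L[ℝ] ℝ) x :=
    (proj 1 : (Fin 3 → ℝ) →L[ℝ] ℝ).hasFDerivAt
  have hr : HasFDerivAt (fun v : Fin 3 → ℝ => v 2) (proj 2 : (Fin 3 → ℝ) →L[ℝ] ℝ) x :=
    (proj 2 : (Fin 3 → ℝ) →L[ℝ] ℝ).hasFDerivAt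
  have h2 := (hp.const_mul lam).mul hr
  have h3 := (hq.const_mul lam).mul_const ((2 - n)⁻¹)
  have hL : HasFDerivAt (Fvec n lam) (ContinuousLinearMap.pi f') x := by
    apply hasFDerivAt_pi''
    intro i
    rw [ContinuousLinearMap.proj_pi]
    fin_cases i
    · simp only [Fvec, div_eq_mul_inv, Fin.isValue, Matrix.cons_val_zero, Matrix.cons_val_one,
        Matrix.head_cons, Matrix.cons_val_two, Matrix.tail_cons]
      have h1 := ((((hr.sub_const 1).mul_const (lam⁻¹)).add_const 1).sub_const (n * (2 - n)⁻¹))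
      have := hp.mul ((h1.sub h2).sub h3)
      refine this.congr_fderiv ?_
      ext w
      simp [hf', hx0, hx1, hx2, div_eq_mul_inv, mul_inv]
      try tauto
      try ring
    · simp only [Fvec, div_eq_mul_inv, Fin.isValue, Matrix.cons_val_zero, Matrix.cons_val_one,
        Matrix.head_cons, Matrix.cons_val_two, Matrix.tail_cons]
      have inner1 := (h2.const_sub 1).sub h3
      have := (hq.mul inner1).add ((hp.const_mul n).mul hr)
      refine this.congr_fderiv ?_
      ext w
      simp [hf', hx0, hx1, hx2, div_eq_mul_inv, mul_inv]
      try tauto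
      try ring
    · simp only [Fvec, div_eq_mul_inv, Fin.isValue, Matrix.cons_val_zero, Matrix.cons_val_one,
        Matrix.head_cons, Matrix.cons_val_two, Matrix.tail_cons]
      have inner2 := (((((hr.sub_const 1).const_mul (1 - n)).mul_const (lam⁻¹)).sub_const 1).add_const
        (n * (2 - n)⁻¹)).add h2 |>.add h3
      have := (hr.mul_const (n⁻¹)).mul inner2
      refine this.congr_fderiv ?_
      ext w
      simp [hf', hx0, hx1, hx2, div_eq_mul_inv, mul_inv]
      try tauto
      try ring
  have hfd : fderiv ℝ (Fvec n lam) x = ContinuousLinearMap.pi f' := hL.fderiv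
  unfold Jac
  rw [hfd]
  ext i j
  rw [LinearMap.toMatrix'_apply]
  fin_cases i <;> fin_cases j <;>
    simp [hf', ContinuousLinearMap.pi_apply] <;> ring

/-- the equilibrium `M₀` is an unstable node, with eigenvalues
`1`, `2` and `(1-n)r₀/(nλ)`, all real and strictly positive. -/
theorem stmt16 (n lam : ℝ) (hn0 : 0 < n) (hn1 : n < 1) (hlam : 0 < lam)
    (r₀ : ℝ) (hr₀ : r₀ = 1 + 2 * lam / (2 - n)) :
    (Jac n lam ![0, 0, r₀]).charpoly =
      (X - C 1) * (X - C 2) * (X - C ((1 - n) * r₀ / (n * lam))) ∧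
    spectrum ℝ (Jac n lam ![0, 0, r₀]) = {1, 2, (1 - n) * r₀ / (n * lam)} ∧
    (0 : ℝ) < 1 ∧ (0 : ℝ) < 2 ∧ 0 < (1 - n) * r₀ / (n * lam) := by
  have hn2 : (2 : ℝ) - n ≠ 0 := by linarith
  have hnn : n ≠ 0 := ne_of_gt hn0
  have hln : lam ≠ 0 := ne_of_gt hlam
  have ha : (r₀ - 1) / lam + 1 - n / (2 - n) = 2 := by
    subst hr₀; field_simp; ring
  have hc : ((1 - n) * (r₀ - 1) / lam - 1 + n / (2 - n)) / n + r₀ / n * ((1 - n) / lam)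
      = (1 - n) * r₀ / (n * lam) := by
    subst hr₀; field_simp; ring
  have hJ : Jac n lam ![0, 0, r₀] =
      !![2, 0, 0; n * r₀, 1, 0;
         lam * r₀ ^ 2 / n, lam * r₀ / (n * (2 - n)), (1 - n) * r₀ / (n * lam)] := by
    rw [jac_eq, ha, hc]
  set c : ℝ := (1 - n) * r₀ / (n * lam) with hcdef
  have h2n : (0:ℝ) < 2 - n := by linarith
  have hr0pos : 0 < r₀ := by
    have := div_pos (by linarith : (0:ℝ) < 2 * lam) h2n
    rw [hr₀]; linarith
  have hcpos : 0 < c := div_pos (mul_pos (by linarith) hr0pos) (mul_pos hn0 hlam)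
  refine ⟨?_, ?_, one_pos, two_pos, hcpos⟩
  · rw [hJ, Matrix.charpoly, Matrix.det_fin_three]
    simp [Matrix.charmatrix_apply, Matrix.diagonal_apply]
    try ring
    try tauto
  · rw [hJ]
    ext μ
    have hdet : (algebraMap ℝ (Matrix (Fin 3) (Fin 3) ℝ) μ -
        !![2, 0, 0; n * r₀, 1, 0;
           lam * r₀ ^ 2 / n, lam * r₀ / (n * (2 - n)), c]).det
        = (μ - 2) * (μ - 1) * (μ - c) := by
      rw [Matrix.det_fin_three]
      simp [Matrix.algebraMap_matrix_apply]
      try ring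
    simp only [spectrum.mem_iff, Matrix.isUnit_iff_isUnit_det, hdet, isUnit_iff_ne_zero,
      not_not, mul_eq_zero, sub_eq_zero, Set.mem_insert_iff, Set.mem_singleton_iff]
    try tauto
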